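/- Let g be a finite-dimensional real Lie algebra and n ⊆ g a nonzero nilpotent Lie ideal with dim(g/n) = 1, and let z := {X ∈ n | ∀ Y ∈ n, [X,Y] = 0} be the centre of n. Then the following are equivalent: (a) there exists ξ₀ ∈ g* with g(ξ₀) := {X ∈ g | ∀ Y ∈ g, ξ₀([X,Y]) = 0} = {0}; (b) [g,z] ≠ {0}, dim z = 1, and there exists a linear functional ℓ on n with {X ∈ n | ∀ Y ∈ n, ℓ([X,Y]) = 0} = z. -/

import Mathlib

open Module

/-- The centre `{X ∈ n | ∀ Y ∈ n, [X,Y] = 0}` of a Lie ideal `n`, as a submodule of the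
ambient Lie algebra `g`. -/
def centreOfIdeal (g : Type*) [LieRing g] [LieAlgebra ℝ g] (n : LieIdeal ℝ g) :
    Submodule ℝ g where
  carrier := {X | X ∈ n ∧ ∀ Y ∈ n, ⁅X, Y⁆ = 0}
  add_mem' := by
    rintro a b ⟨ha, ha'⟩ ⟨hb, hb'⟩
    exact ⟨add_mem ha hb, fun Y hY => by rw [add_lie, ha' Y hY, hb' Y hY, add_zero]⟩
  zero_mem' := ⟨zero_mem n, fun Y _ => zero_lie Y⟩
  smul_mem' := by
    rintro c x ⟨hx, hx'⟩
    exact ⟨SMulMemClass.smul_mem c hx, fun Y hY => by rw [smul_lie, hx' Y hY, smul_zero]⟩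

section Aux

variable {g : Type*} [LieRing g] [LieAlgebra ℝ g] (n : LieIdeal ℝ g)

/-- In a nilpotent Lie algebra, any proper submodule `C` admits an element outside of it
whose brackets all land inside it. -/
lemma exists_almost_central [LieRing.IsNilpotent ↥n] (C : Submodule ℝ ↥n)
    (hC : ¬((⊤ : Submodule ℝ ↥n) ≤ C)) :
    ∃ W : ↥n, W ∉ C ∧ ∀ Y : ↥n, ⁅Y, W⁆ ∈ C := by
  have hex : ∃ k, ∀ x ∈ LieModule.lowerCentralSeries ℝ ↥n ↥n k, x ∈ C := by
    obtain ⟨k, hk⟩ := (LieModule.isNilpotent_iff ℝ ↥n ↥n).mp inferInstance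
    exact ⟨k, fun x hx => by rw [hk, LieSubmodule.mem_bot] at hx; simp [hx]⟩
  classical
  set k := Nat.find hex with hkdef
  have hk : ∀ x ∈ LieModule.lowerCentralSeries ℝ ↥n ↥n k, x ∈ C := Nat.find_spec hex
  have hk0 : k ≠ 0 := by
    intro h0
    apply hC
    intro x _
    exact hk x (by rw [h0, LieModule.lowerCentralSeries_zero]; exact LieSubmodule.mem_top x)
  obtain ⟨m, hmk⟩ := Nat.exists_eq_succ_of_ne_zero hk0
  have hm : ¬ ∀ x ∈ LieModule.lowerCentralSeries ℝ ↥n ↥n m, x ∈ C := by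
    have := Nat.find_min hex (m := m) (by omega)
    simpa using this
  push_neg at hm
  obtain ⟨W, hW, hWC⟩ := hm
  refine ⟨W, hWC, fun Y => ?_⟩
  apply hk
  rw [hmk, LieModule.lowerCentralSeries_succ]
  exact LieSubmodule.lie_mem_lie (LieSubmodule.mem_top Y) hW

variable [FiniteDimensional ℝ g]

/-- The bracket of any two elements lies in a codimension one ideal. -/
lemma lie_mem_of_codim_one (hcodim : finrank ℝ (g ⧸ n) = 1) (a b : g) : ⁅a, b⁆ ∈ n := by
  have hmk : (LieSubmodule.Quotient.mk (N := n) ⁅a, b⁆ : g ⧸ n) = 0 := by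
    obtain hz | hne := eq_or_ne (LieSubmodule.Quotient.mk (N := n) a : g ⧸ n) 0
    · rw [LieSubmodule.Quotient.mk_bracket, hz, zero_lie]
    · obtain ⟨c, hc⟩ := (finrank_eq_one_iff_of_nonzero' _ hne).mp hcodim
        (LieSubmodule.Quotient.mk (N := n) b)
      rw [LieSubmodule.Quotient.mk_bracket, ← hc, lie_smul, lie_self, smul_zero]
  exact (LieSubmodule.Quotient.mk_eq_zero' (N := n)).mp hmk

/-- A derivation-type fact: brackets with the ambient algebra preserve the centre of the ideal. -/
lemma lie_mem_centre (Y : g) {V : g} (hV : V ∈ centreOfIdeal g n) :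
    ⁅Y, V⁆ ∈ centreOfIdeal g n := by
  obtain ⟨hVn, hVc⟩ := hV
  refine ⟨n.lie_mem hVn, fun M hM => ?_⟩
  have h1 : ⁅Y, ⁅V, M⁆⁆ = ⁅⁅Y, V⁆, M⁆ + ⁅V, ⁅Y, M⁆⁆ := leibniz_lie Y V M
  rw [hVc M hM, lie_zero, hVc _ (n.lie_mem hM)] at h1
  simpa using h1.symm

end Aux


theorem exactSymplectic_iff_flat
    (g : Type*) [LieRing g] [LieAlgebra ℝ g] [FiniteDimensional ℝ g]
    (n : LieIdeal ℝ g) [LieRing.IsNilpotent ↥n] (hn : n ≠ ⊥)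
    (hcodim : finrank ℝ (g ⧸ n) = 1) :
    (∃ ξ₀ : Module.Dual ℝ g, ∀ X : g, (∀ Y : g, ξ₀ ⁅X, Y⁆ = 0) → X = 0) ↔
    ((∃ X Z : g, Z ∈ centreOfIdeal g n ∧ ⁅X, Z⁆ ≠ 0) ∧
      finrank ℝ (centreOfIdeal g n) = 1 ∧
      ∃ ℓ : Module.Dual ℝ ↥n,
        {X : ↥n | ∀ Y : ↥n, ℓ ⁅X, Y⁆ = 0} = {X : ↥n | (X : g) ∈ centreOfIdeal g n}) := by
  have hbr : ∀ (x y : ↥n), (↑⁅x, y⁆ : g) = ⁅(x : g), (y : g)⁆ := fun x y => rfl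
  constructor
  · rintro ⟨ξ₀, hξ⟩
    -- a nonzero central element of n
    obtain ⟨W, hW0, hWc⟩ := exists_almost_central n ⊥ (by
      intro htop
      obtain ⟨x, hxn, hx0⟩ : ∃ x ∈ n, x ≠ 0 := by
        by_contra h
        push_neg at h
        exact hn ((LieSubmodule.eq_bot_iff n).mpr h)
      exact hx0 (by simpa [Submodule.mem_bot] using htop (Submodule.mem_top (x := ⟨x, hxn⟩))))
    rw [Submodule.mem_bot] at hW0
    have hWz : (W : g) ∈ centreOfIdeal g n := by
      refine ⟨W.2, fun Y hY => ?_⟩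
      have h0 : ⁅(⟨Y, hY⟩ : ↥n), W⁆ = 0 := Submodule.mem_bot ℝ |>.mp (hWc ⟨Y, hY⟩)
      have : ⁅(W : g), Y⁆ = -⁅Y, (W : g)⁆ := (lie_skew _ _).symm
      rw [this, ← hbr ⟨Y, hY⟩ W, h0]
      simp
    have hWne : (W : g) ≠ 0 := fun h => hW0 (Subtype.ext h)
    -- conjunct 1
    have hconj1 : ∃ X Z : g, Z ∈ centreOfIdeal g n ∧ ⁅X, Z⁆ ≠ 0 := by
      by_contra h
      push_neg at h
      refine hWne (hξ _ fun Y => ?_)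
      have : ⁅(W : g), Y⁆ = -⁅Y, (W : g)⁆ := (lie_skew _ _).symm
      rw [this, h Y _ hWz, neg_zero, map_zero]
    -- the bilinear form
    let B : g →ₗ[ℝ] Dual ℝ g := LinearMap.mk₂ ℝ (fun X Y => ξ₀ ⁅X, Y⁆)
      (fun X X' Y => by simp [add_lie])
      (fun c X Y => by simp [smul_lie])
      (fun X Y Y' => by simp [lie_add])
      (fun c X Y => by simp [lie_smul])
    have hBinj : Function.Injective B := by
      rw [← LinearMap.ker_eq_bot]
      refine (Submodule.eq_bot_iff _).mpr fun X hX => hξ X fun Y => ?_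
      simpa [B] using LinearMap.congr_fun (LinearMap.mem_ker.mp hX) Y
    have hBsurj : Function.Surjective B :=
      (LinearMap.injective_iff_surjective_of_finrank_eq_finrank
        Subspace.dual_finrank_eq.symm).mp hBinj
    let Ψ : g →ₗ[ℝ] Dual ℝ ↥n := (LieSubmodule.toSubmodule n).dualRestrict ∘ₗ B
    have hΨsurj : Function.Surjective Ψ :=
      (Subspace.dualRestrict_surjective).comp hBsurj
    have hfr : finrank ℝ (LieSubmodule.toSubmodule n) + 1 = finrank ℝ g := by
      have h0 := Submodule.finrank_quotient_add_finrank (LieSubmodule.toSubmodule n)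
      have hq : finrank ℝ (g ⧸ LieSubmodule.toSubmodule n) = 1 := hcodim
      omega
    have hker : finrank ℝ (LinearMap.ker Ψ) = 1 := by
      have hrn := Ψ.finrank_range_add_finrank_ker
      rw [LinearMap.range_eq_top.mpr hΨsurj] at hrn
      have h2 : finrank ℝ (⊤ : Submodule ℝ (Dual ℝ ↥n)) = finrank ℝ ↥n := by
        rw [finrank_top, Subspace.dual_finrank_eq]
      rw [h2] at hrn
      have h3 : finrank ℝ ↥n = finrank ℝ (LieSubmodule.toSubmodule n) := rfl
      rw [h3] at hrn
      omega
    have hΨmem : ∀ (X : g), Ψ X = 0 ↔ ∀ Y : ↥n, ξ₀ ⁅X, (Y : g)⁆ = 0 := by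
      intro X
      constructor
      · intro h Y
        exact LinearMap.congr_fun h Y
      · intro h
        ext Y
        exact h Y
    set Nl : Submodule ℝ g := LieSubmodule.toSubmodule n ⊓ LinearMap.ker Ψ with hNl
    have hzNl : centreOfIdeal g n ≤ Nl := by
      rintro X ⟨hX1, hX2⟩
      refine ⟨hX1, LinearMap.mem_ker.mpr ((hΨmem X).mpr fun Y => ?_)⟩
      rw [hX2 _ Y.2, map_zero]
    have hNl1 : finrank ℝ Nl ≤ 1 := hker ▸ Submodule.finrank_mono inf_le_right
    have hz1 : 1 ≤ finrank ℝ (centreOfIdeal g n) := by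
      have hne : (⟨(W : g), hWz⟩ : centreOfIdeal g n) ≠ 0 :=
        fun h => hWne (by simpa using congrArg Subtype.val h)
      have : 0 < finrank ℝ (centreOfIdeal g n) :=
        Module.finrank_pos_iff.mpr (nontrivial_of_ne _ 0 hne)
      omega
    have heq : centreOfIdeal g n = Nl :=
      Submodule.eq_of_le_of_finrank_le hzNl (by omega)
    have hdim : finrank ℝ (centreOfIdeal g n) = 1 := le_antisymm (heq ▸ hNl1) hz1
    refine ⟨hconj1, hdim, ξ₀ ∘ₗ (LieSubmodule.toSubmodule n).subtype, ?_⟩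
    ext X
    simp only [Set.mem_setOf_eq]
    constructor
    · intro h
      rw [heq]
      refine ⟨X.2, LinearMap.mem_ker.mpr ((hΨmem X).mpr fun Y => ?_)⟩
      exact h Y
    · intro h Y
      show ξ₀ ⁅(X : g), (Y : g)⁆ = 0
      rw [h.2 _ Y.2, map_zero]
  · rintro ⟨⟨X, Z, hZ, hXZ⟩, hdim, ℓ₀, hℓ₀⟩
    have hZ0 : Z ≠ 0 := fun h => hXZ (by rw [h, lie_zero])
    set Zn : ↥n := ⟨Z, hZ.1⟩ with hZn
    have hZn0 : Zn ≠ 0 := fun h => hZ0 (congrArg Subtype.val h)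
    set Zz : centreOfIdeal g n := ⟨Z, hZ⟩ with hZzdef
    have hZz0 : Zz ≠ 0 := fun h => hZ0 (congrArg Subtype.val h)
    have hspan : ∀ V, V ∈ centreOfIdeal g n → ∃ t : ℝ, V = t • Z := by
      intro V hV
      obtain ⟨t, ht⟩ := (finrank_eq_one_iff_of_nonzero' Zz hZz0).mp hdim ⟨V, hV⟩
      exact ⟨t, by simpa using (congrArg Subtype.val ht).symm⟩
    have hXn : X ∉ n := fun hXmem =>
      hXZ (by rw [← neg_neg ⁅X, Z⁆, lie_skew, hZ.2 X hXmem, neg_zero])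
    obtain ⟨lam, hlam⟩ := hspan ⁅X, Z⁆ (lie_mem_centre n X hZ)
    have hlam0 : lam ≠ 0 := fun h => hXZ (by rw [hlam, h, zero_smul])
    -- Step 1: normalise ℓ
    obtain ⟨ℓ, hℓ, hℓZ⟩ : ∃ ℓ : Module.Dual ℝ ↥n,
        ({X : ↥n | ∀ Y : ↥n, ℓ ⁅X, Y⁆ = 0} = {X : ↥n | (X : g) ∈ centreOfIdeal g n})
        ∧ ℓ Zn ≠ 0 := by
      by_cases hlz : ℓ₀ Zn ≠ 0
      · exact ⟨ℓ₀, hℓ₀, hlz⟩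
      push_neg at hlz
      have hvan : ∀ V : ↥n, (V : g) ∈ centreOfIdeal g n → ℓ₀ V = 0 := by
        intro V hV
        obtain ⟨t, ht⟩ := hspan _ hV
        have hVt : V = t • Zn := Subtype.ext ht
        rw [hVt, map_smul, hlz, smul_zero]
      set C : Submodule ℝ ↥n :=
        (centreOfIdeal g n).comap (LieSubmodule.toSubmodule n).subtype with hC
      have hCmem : ∀ V : ↥n, V ∈ C ↔ (V : g) ∈ centreOfIdeal g n := fun V => Iff.rfl
      by_cases htop : (⊤ : Submodule ℝ ↥n) ≤ C
      · -- n is abelian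
        have habel : ∀ A B : ↥n, ⁅A, B⁆ = (0 : ↥n) := by
          intro A B
          have hA : (A : g) ∈ centreOfIdeal g n := (hCmem A).mp (htop (Submodule.mem_top))
          exact Subtype.ext (by rw [hbr A B, hA.2 _ B.2]; simp)
        obtain ⟨φ, hφ⟩ : ∃ φ : Module.Dual ℝ ↥n, φ Zn ≠ 0 := by
          by_contra h
          push_neg at h
          exact hZn0 ((forall_dual_apply_eq_zero_iff ℝ Zn).mp h)
        refine ⟨φ, ?_, hφ⟩
        ext V
        simp only [Set.mem_setOf_eq]
        constructor
        · intro _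
          exact (hCmem V).mp (htop (Submodule.mem_top))
        · intro _ Y
          rw [habel V Y, map_zero]
      · exfalso
        obtain ⟨W, hWC, hWb⟩ := exists_almost_central n C htop
        have hmem : W ∈ {X : ↥n | ∀ Y : ↥n, ℓ₀ ⁅X, Y⁆ = 0} := by
          intro Y
          have h1 : ⁅W, Y⁆ = -⁅Y, W⁆ := (lie_skew _ _).symm
          rw [h1, map_neg, hvan _ ((hCmem _).mp (hWb Y)), neg_zero]
        rw [hℓ₀] at hmem
        exact hWC ((hCmem W).mpr hmem)
    -- Step 2: build ξ₀
    obtain ⟨q, hq⟩ := Submodule.exists_isCompl (LieSubmodule.toSubmodule n)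
    set π := (LieSubmodule.toSubmodule n).linearProjOfIsCompl q hq with hπdef
    refine ⟨ℓ ∘ₗ π, ?_⟩
    have hπ : ∀ (a : g) (ha : a ∈ n), (ℓ ∘ₗ π) a = ℓ ⟨a, ha⟩ := by
      intro a ha
      have hpa : π a = ⟨a, ha⟩ := Submodule.linearProjOfIsCompl_apply_left hq ⟨a, ha⟩
      exact congrArg ℓ hpa
    intro W hW
    -- decompose W
    have hcodim' : finrank ℝ (g ⧸ LieSubmodule.toSubmodule n) = 1 := hcodim
    have hmkX : (Submodule.Quotient.mk X : g ⧸ LieSubmodule.toSubmodule n) ≠ 0 :=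
      fun h => hXn ((Submodule.Quotient.mk_eq_zero _).mp h)
    obtain ⟨c, hc⟩ := (finrank_eq_one_iff_of_nonzero' _ hmkX).mp hcodim'
      (Submodule.Quotient.mk W)
    have hNmem : W - c • X ∈ n := by
      have h0 : (Submodule.Quotient.mk (W - c • X) : g ⧸ LieSubmodule.toSubmodule n) = 0 := by
        rw [Submodule.Quotient.mk_sub, Submodule.Quotient.mk_smul, hc, sub_self]
      exact (Submodule.Quotient.mk_eq_zero _).mp h0
    have hξZ : (ℓ ∘ₗ π) Z = ℓ Zn := hπ Z hZ.1
    -- c = 0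
    have hc0 : c = 0 := by
      have h1 := hW Z
      have hsplit : ⁅W, Z⁆ = c • ⁅X, Z⁆ + ⁅W - c • X, Z⁆ := by
        rw [← smul_lie, ← add_lie, add_sub_cancel]
      have hNZ : ⁅W - c • X, Z⁆ = 0 := by
        rw [← neg_neg ⁅W - c • X, Z⁆, lie_skew, hZ.2 _ hNmem, neg_zero]
      rw [hsplit, hNZ, add_zero, hlam, smul_smul, map_smul, hξZ, smul_eq_mul] at h1
      rcases mul_eq_zero.mp h1 with h | h
      · rcases mul_eq_zero.mp h with h' | h'
        · exact h'
        · exact absurd h' hlam0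
      · exact absurd h hℓZ
    have hWn : W ∈ n := by
      have := hNmem
      rwa [hc0, zero_smul, sub_zero] at this
    set Wn : ↥n := ⟨W, hWn⟩ with hWndef
    have hWnl : Wn ∈ {X : ↥n | ∀ Y : ↥n, ℓ ⁅X, Y⁆ = 0} := by
      intro Y
      have h2 := hW (Y : g)
      have hm : ⁅W, (Y : g)⁆ ∈ n := lie_mem_of_codim_one n hcodim W Y
      rw [hπ _ hm] at h2
      have : (⟨⁅W, (Y : g)⁆, hm⟩ : ↥n) = ⁅Wn, Y⁆ := Subtype.ext (hbr Wn Y).symm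
      rwa [this] at h2
    rw [hℓ] at hWnl
    obtain ⟨t, ht⟩ := hspan W hWnl
    have h3 := hW X
    have hZX : ⁅Z, X⁆ = -(lam • Z) := by rw [← lie_skew, hlam]
    rw [ht, smul_lie, hZX, smul_neg, map_neg, map_smul, map_smul, hξZ] at h3
    have ht0 : t = 0 := by
      have h4 : t * (lam * ℓ Zn) = 0 := by
        have := neg_eq_zero.mp h3
        simpa [smul_eq_mul] using this
      rcases mul_eq_zero.mp h4 with h | h
      · exact h
      · exact absurd h (mul_ne_zero hlam0 hℓZ)
    rw [ht, ht0, zero_smul]
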